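/- Let S be a 3×3 diagonal matrix with positive diagonal entries, R_p a 3×3 rotation matrix, Σ := R_p S² R_pᵀ, μ ∈ ℝ³ nonzero, c := √(μᵀΣ⁻¹μ), and 0 < κ < c². Then μ̂ := (1/c) S⁻¹ R_pᵀ μ is a unit vector, and for every e in the boundary set E, the vector ê := (c² − κ)^{−1/2} S⁻¹ R_pᵀ e is a unit vector satisfying êᵀμ̂ = b, where b := √(1 − κ/c²). In particular, all such ê lie on a circle embedded in the unit sphere of ℝ³. -/

import Mathlib

open Matrix

lemma dot_conj (A : Matrix (Fin 3) (Fin 3) ℝ) (x y : Fin 3 → ℝ) :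
    x ⬝ᵥ (Aᵀ * A).mulVec y = (A.mulVec x) ⬝ᵥ (A.mulVec y) := by
  rw [← Matrix.mulVec_mulVec, Matrix.dotProduct_mulVec, Matrix.vecMul_transpose]

/-- Isomorphism step: `μ̂ = (1/c)S⁻¹R_pᵀμ` is a unit vector and for every `e` in
the boundary set `E`, `ê = (c²−κ)^{−1/2}S⁻¹R_pᵀe` is a unit vector with
`êᵀμ̂ = b = √(1 − κ/c²)`, i.e. all the `ê` lie on a circle embedded in the
unit sphere. -/
theorem stmt_6 (d : Fin 3 → ℝ) (hd : ∀ i, 0 < d i)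
    (Rp : Matrix (Fin 3) (Fin 3) ℝ) (hRp : Rpᵀ * Rp = 1) (hRpdet : Rp.det = 1)
    (μ : Fin 3 → ℝ) (hμ : μ ≠ 0) (κ : ℝ) :
    let Sm : Matrix (Fin 3) (Fin 3) ℝ := Matrix.diagonal d
    let Cov : Matrix (Fin 3) (Fin 3) ℝ := Rp * (Sm * Sm) * Rpᵀ
    let c : ℝ := Real.sqrt (μ ⬝ᵥ Cov⁻¹.mulVec μ)
    let τ : (Fin 3 → ℝ) → ℝ := fun x => (x ⬝ᵥ Cov⁻¹.mulVec μ) / (x ⬝ᵥ Cov⁻¹.mulVec x)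
    let Dray : (Fin 3 → ℝ) → ℝ := fun x => (τ x • x - μ) ⬝ᵥ Cov⁻¹.mulVec (τ x • x - μ)
    let E : Set (Fin 3 → ℝ) := {p | ∃ x : Fin 3 → ℝ, x ≠ 0 ∧ Dray x = κ ∧ p = τ x • x}
    let μhat : Fin 3 → ℝ := (1 / c) • (Sm⁻¹ * Rpᵀ).mulVec μ
    let b : ℝ := Real.sqrt (1 - κ / c ^ 2)
    0 < κ → κ < c ^ 2 →
      μhat ⬝ᵥ μhat = 1 ∧
      ∀ e ∈ E,
        let ehat : Fin 3 → ℝ := (Real.sqrt (c ^ 2 - κ))⁻¹ • (Sm⁻¹ * Rpᵀ).mulVec e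
        ehat ⬝ᵥ ehat = 1 ∧ ehat ⬝ᵥ μhat = b := by
  intro Sm Cov c τ Dray E μhat b hκ hκc
  set A : Matrix (Fin 3) (Fin 3) ℝ := Sm⁻¹ * Rpᵀ with hA
  have hRp2 : Rp * Rpᵀ = 1 := mul_eq_one_comm.mp hRp
  have hRpinv : Rp⁻¹ = Rpᵀ := Matrix.inv_eq_right_inv hRp2
  have hRpTinv : Rpᵀ⁻¹ = Rp := Matrix.inv_eq_right_inv hRp
  have hSmdet : Sm.det ≠ 0 := by
    rw [show Sm = Matrix.diagonal d from rfl, Matrix.det_diagonal]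
    exact ne_of_gt (Finset.prod_pos fun i _ => hd i)
  have hSmU : IsUnit Sm.det := isUnit_iff_ne_zero.mpr hSmdet
  have hSmT : Smᵀ = Sm := Matrix.diagonal_transpose d
  have hCovinv : Cov⁻¹ = Aᵀ * A := by
    show (Rp * (Sm * Sm) * Rpᵀ)⁻¹ = (Sm⁻¹ * Rpᵀ)ᵀ * (Sm⁻¹ * Rpᵀ)
    rw [Matrix.mul_inv_rev, Matrix.mul_inv_rev, Matrix.mul_inv_rev, hRpinv, hRpTinv,
      Matrix.transpose_mul, Matrix.transpose_transpose, Matrix.transpose_nonsing_inv, hSmT]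
    noncomm_ring
  have hdot : ∀ x y : Fin 3 → ℝ, x ⬝ᵥ Cov⁻¹.mulVec y = (A.mulVec x) ⬝ᵥ (A.mulVec y) := by
    intro x y; rw [hCovinv, dot_conj]
  have hAdet : IsUnit A.det := by
    rw [hA, Matrix.det_mul, Matrix.det_transpose, hRpdet, mul_one]
    exact Matrix.isUnit_nonsing_inv_det _ hSmU
  have hAinj : ∀ x : Fin 3 → ℝ, x ≠ 0 → A.mulVec x ≠ 0 := by
    intro x hx h0
    apply hx
    have h1 : A⁻¹.mulVec (A.mulVec x) = x := by
      rw [Matrix.mulVec_mulVec, Matrix.nonsing_inv_mul _ hAdet, Matrix.one_mulVec]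
    rw [← h1, h0, Matrix.mulVec_zero]
  have hpos : ∀ u : Fin 3 → ℝ, u ≠ 0 → 0 < u ⬝ᵥ u := by
    intro u hu
    have h0 : (0 : ℝ) ≤ u ⬝ᵥ u := Finset.sum_nonneg fun i _ => mul_self_nonneg (u i)
    rcases lt_or_eq_of_le h0 with h | h
    · exact h
    · exact absurd ((dotProduct_self_eq_zero).mp h.symm) hu
  set m : Fin 3 → ℝ := A.mulVec μ with hm
  have hmne : m ≠ 0 := hAinj μ hμ
  have hmm : 0 < m ⬝ᵥ m := hpos m hmne
  have hc2 : c ^ 2 = m ⬝ᵥ m := by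
    show (Real.sqrt (μ ⬝ᵥ Cov⁻¹.mulVec μ)) ^ 2 = m ⬝ᵥ m
    rw [hdot μ μ, Real.sq_sqrt]
    exact hmm.le
  have hc : 0 < c := Real.sqrt_pos.mpr (by rw [hdot μ μ]; exact hmm)
  constructor
  · show ((1 / c) • A.mulVec μ) ⬝ᵥ ((1 / c) • A.mulVec μ) = 1
    rw [smul_dotProduct, dotProduct_smul, ← hm, smul_eq_mul, smul_eq_mul,
      ← hc2]
    field_simp
  · rintro e ⟨x, hx, hD, rfl⟩
    intro ehat
    set u : Fin 3 → ℝ := A.mulVec x with hu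
    have hune : u ≠ 0 := hAinj x hx
    have huu : 0 < u ⬝ᵥ u := hpos u hune
    have ht : τ x = (u ⬝ᵥ m) / (u ⬝ᵥ u) := by
      show (x ⬝ᵥ Cov⁻¹.mulVec μ) / (x ⬝ᵥ Cov⁻¹.mulVec x) = _
      rw [hdot x μ, hdot x x]
    have hAe : A.mulVec (τ x • x) = τ x • u := by rw [Matrix.mulVec_smul]
    have hexp : Dray x = τ x * τ x * (u ⬝ᵥ u) - 2 * (τ x * (u ⬝ᵥ m)) + m ⬝ᵥ m := by
      show (τ x • x - μ) ⬝ᵥ Cov⁻¹.mulVec (τ x • x - μ) = _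
      rw [hdot, Matrix.mulVec_sub, hAe, ← hm]
      simp only [sub_dotProduct, dotProduct_sub, smul_dotProduct,
        dotProduct_smul, smul_eq_mul, dotProduct_comm m u]
      ring
    have heAe : A.mulVec (τ x • x) ⬝ᵥ A.mulVec (τ x • x) = τ x * τ x * (u ⬝ᵥ u) := by
      rw [hAe, smul_dotProduct, dotProduct_smul, smul_eq_mul, smul_eq_mul]
      ring
    have heAm : A.mulVec (τ x • x) ⬝ᵥ m = τ x * (u ⬝ᵥ m) := by
      rw [hAe, smul_dotProduct, smul_eq_mul]
    -- now pass to scalars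
    set p : ℝ := u ⬝ᵥ m with hp
    set q : ℝ := u ⬝ᵥ u with hq
    set r : ℝ := m ⬝ᵥ m with hr
    have hqne : q ≠ 0 := ne_of_gt huu
    have hkey : p ^ 2 / q = c ^ 2 - κ := by
      have h2 : τ x * τ x * q - 2 * (τ x * p) + r = κ := by rw [← hexp]; exact hD
      rw [ht] at h2
      rw [hc2]
      field_simp at h2 ⊢
      have h3 : (p * p - (r - κ) * q) * (q * q) = 0 := by linear_combination (-(q * q)) * h2
      have h4 : p * p - (r - κ) * q = 0 := by
        rcases mul_eq_zero.mp h3 with h | h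
        · exact h
        · exact absurd h (by positivity)
      linear_combination h4
    have hck : 0 < c ^ 2 - κ := by linarith
    have hs : Real.sqrt (c ^ 2 - κ) ^ 2 = c ^ 2 - κ := Real.sq_sqrt hck.le
    have hsne : Real.sqrt (c ^ 2 - κ) ≠ 0 := ne_of_gt (Real.sqrt_pos.mpr hck)
    have heAe' : A.mulVec (τ x • x) ⬝ᵥ A.mulVec (τ x • x) = c ^ 2 - κ := by
      rw [heAe, ht, ← hkey]; field_simp
    have heAm' : A.mulVec (τ x • x) ⬝ᵥ m = c ^ 2 - κ := by
      rw [heAm, ht, ← hkey]; field_simp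
    constructor
    · show ((Real.sqrt (c ^ 2 - κ))⁻¹ • A.mulVec (τ x • x)) ⬝ᵥ
        ((Real.sqrt (c ^ 2 - κ))⁻¹ • A.mulVec (τ x • x)) = 1
      rw [smul_dotProduct, dotProduct_smul, heAe', smul_eq_mul, smul_eq_mul,
        ← hs]
      field_simp
      simp only [hs]
    · show ((Real.sqrt (c ^ 2 - κ))⁻¹ • A.mulVec (τ x • x)) ⬝ᵥ ((1 / c) • m) = b
      rw [smul_dotProduct, dotProduct_smul, heAm', smul_eq_mul, smul_eq_mul]
      have hb : b = Real.sqrt (c ^ 2 - κ) / c := by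
        show Real.sqrt (1 - κ / c ^ 2) = _
        rw [show (1 : ℝ) - κ / c ^ 2 = (c ^ 2 - κ) / c ^ 2 by field_simp,
          Real.sqrt_div hck.le, Real.sqrt_sq hc.le]
      rw [hb, ← hs]
      field_simp
      simp only [hs]
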